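/- For any finite connected simple graph G, 0 ≤ μt(G) ≤ n(G) − diam(G) + 1, where n(G) is the order of G and diam(G) is its diameter. -/

import Mathlib

open SimpleGraph

/-- `X` is a total mutual-visibility set of `G`: every two vertices of `G` are `X`-visible,
i.e. joined by a shortest path whose internal vertices avoid `X`. -/
def IsTMVSet {V : Type*} (G : SimpleGraph V) (X : Set V) : Prop :=
  ∀ x y : V, ∃ p : G.Walk x y, p.length = G.dist x y ∧
    ∀ w ∈ p.support, w ≠ x → w ≠ y → w ∉ X

/-- The total mutual-visibility number of `G`. -/
noncomputable def muT {V : Type*} (G : SimpleGraph V) : ℕ :=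
  sSup {n : ℕ | ∃ X : Set V, IsTMVSet G X ∧ X.ncard = n}

/-- `D` is a dominating set of `G`. -/
def IsDomSet {V : Type*} (G : SimpleGraph V) (D : Set V) : Prop :=
  ∀ v : V, v ∉ D → ∃ u ∈ D, G.Adj u v

/-- The domination number of `G`. -/
noncomputable def gammaDom {V : Type*} (G : SimpleGraph V) : ℕ :=
  sInf {n : ℕ | ∃ D : Set V, IsDomSet G D ∧ D.ncard = n}

/-- `D` is a connected dominating set of `G`. -/
def IsConnDomSet {V : Type*} (G : SimpleGraph V) (D : Set V) : Prop :=
  IsDomSet G D ∧ (G.induce D).Connected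

/-- The connected domination number of `G`. -/
noncomputable def gammaConnDom {V : Type*} (G : SimpleGraph V) : ℕ :=
  sInf {n : ℕ | ∃ D : Set V, IsConnDomSet G D ∧ D.ncard = n}

/-- The closed neighborhood of a vertex. -/
def closedNbhd {V : Type*} (G : SimpleGraph V) (v : V) : Set V :=
  insert v (G.neighborSet v)

/-- The set of simplicial vertices of `G`. -/
def simpSet {V : Type*} (G : SimpleGraph V) : Set V :=
  {v | G.IsClique (G.neighborSet v)}

/-- The set `P(G)` of vertices that appear as the unique common closed neighbor of
two vertices. -/
def pSet {V : Type*} (G : SimpleGraph V) : Set V :=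
  {v | ∃ u w : V, closedNbhd G u ∩ closedNbhd G w = {v}}

/-- The set `C(G)` of vertices belonging to every maximum total mutual-visibility set. -/
def compulsorySet {V : Type*} (G : SimpleGraph V) : Set V :=
  {v | ∀ X : Set V, IsTMVSet G X → X.ncard = muT G → v ∈ X}

/-- The set `F(G)` of vertices belonging to no maximum total mutual-visibility set. -/
def forbiddenSet {V : Type*} (G : SimpleGraph V) : Set V :=
  {v | ∀ X : Set V, IsTMVSet G X → X.ncard = muT G → v ∉ X}

/-- The independent total mutual-visibility number of `G`. -/
noncomputable def muIT {V : Type*} (G : SimpleGraph V) : ℕ :=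
  sSup {n : ℕ | ∃ X : Set V, IsTMVSet G X ∧ (∀ u ∈ X, ∀ v ∈ X, ¬ G.Adj u v) ∧ X.ncard = n}

/-- The join `G + H` of two graphs. -/
def joinGraph {V W : Type*} (G : SimpleGraph V) (H : SimpleGraph W) :
    SimpleGraph (V ⊕ W) :=
  SimpleGraph.fromRel (fun x y =>
    (∃ a b, x = Sum.inl a ∧ y = Sum.inl b ∧ G.Adj a b) ∨
    (∃ a b, x = Sum.inr a ∧ y = Sum.inr b ∧ H.Adj a b) ∨
    (∃ a b, x = Sum.inl a ∧ y = Sum.inr b))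

/-- The corona product `G ⊙ H`: a copy of `G` together with a copy `Hᵢ` of `H` for each
vertex `uᵢ` of `G`, where `uᵢ` is joined to all vertices of `Hᵢ`. -/
def coronaProd {V W : Type*} (G : SimpleGraph V) (H : SimpleGraph W) :
    SimpleGraph (V ⊕ V × W) :=
  SimpleGraph.fromRel (fun x y =>
    (∃ a b, x = Sum.inl a ∧ y = Sum.inl b ∧ G.Adj a b) ∨
    (∃ i w w', x = Sum.inr (i, w) ∧ y = Sum.inr (i, w') ∧ H.Adj w w') ∨
    (∃ i w, x = Sum.inl i ∧ y = Sum.inr (i, w)))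

/-- The lexicographic product `G ∘ H`. -/
def lexProd {V W : Type*} (G : SimpleGraph V) (H : SimpleGraph W) :
    SimpleGraph (V × W) where
  Adj x y := G.Adj x.1 y.1 ∨ (x.1 = y.1 ∧ H.Adj x.2 y.2)
  symm := ⟨fun x y h => by
    rcases h with h | ⟨h1, h2⟩
    · exact Or.inl h.symm
    · exact Or.inr ⟨h1.symm, h2.symm⟩⟩
  loopless := ⟨fun x h => by
    rcases h with h | ⟨_, h⟩
    · exact G.loopless.irrefl _ h
    · exact H.loopless.irrefl _ h⟩

/-- `B` induces a 2-connected subgraph of `G`. -/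
def IsTwoConnSet {V : Type*} (G : SimpleGraph V) (B : Set V) : Prop :=
  3 ≤ B.ncard ∧ (G.induce B).Connected ∧ ∀ v ∈ B, (G.induce (B \ {v})).Connected

/-- For any finite connected graph `G`,
`0 ≤ μt(G) ≤ n(G) - diam(G) + 1`. -/
theorem muT_le_card_sub_diam_add_one {V : Type*} [Fintype V] (G : SimpleGraph V)
    (hG : G.Connected) :
    0 ≤ muT G ∧ muT G ≤ Fintype.card V - G.diam + 1 := by
  refine ⟨Nat.zero_le _, ?_⟩
  classical
  have : Nonempty V := hG.nonempty
  obtain ⟨x, y, hxy⟩ := G.exists_dist_eq_diam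
  have hne : {n : ℕ | ∃ X : Set V, IsTMVSet G X ∧ X.ncard = n}.Nonempty := by
    refine ⟨0, ∅, fun a b => ?_, Set.ncard_empty _⟩
    obtain ⟨p, hp⟩ := hG.exists_walk_length_eq_dist a b
    exact ⟨p, hp, fun _ _ _ _ => Set.notMem_empty _⟩
  refine csSup_le hne ?_
  rintro n ⟨X, hX, rfl⟩
  obtain ⟨p, hplen, hpint⟩ := hX x y
  have hpath := p.isPath_of_length_eq_dist hplen
  let S : Finset V := p.support.toFinset \ {x, y}
  have h1 : p.support.toFinset.card = G.diam + 1 := by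
    rw [List.toFinset_card_of_nodup hpath.support_nodup,
      SimpleGraph.Walk.length_support, hplen, hxy]
  have h2 : p.support.toFinset.card - ({x, y} : Finset V).card ≤ S.card :=
    Finset.le_card_sdiff ({x, y} : Finset V) p.support.toFinset
  have h3 : ({x, y} : Finset V).card ≤ 2 := Finset.card_insert_le _ _ |>.trans (by simp)
  have hScard : G.diam - 1 ≤ S.card := by omega
  have hdisj : Disjoint X.toFinset S := by
    rw [Finset.disjoint_left]
    intro w hw hwS
    simp only [S, Finset.mem_sdiff, List.mem_toFinset, Finset.mem_insert,
      Finset.mem_singleton] at hwS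
    exact hpint w hwS.1 (fun h => hwS.2 (Or.inl h)) (fun h => hwS.2 (Or.inr h))
      (Set.mem_toFinset.mp hw)
  have hle : X.toFinset.card + S.card ≤ Fintype.card V := by
    rw [← Finset.card_union_of_disjoint hdisj]
    exact Finset.card_le_univ _
  have hXcard : X.ncard = X.toFinset.card := Set.ncard_eq_toFinset_card' X
  omega
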